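/- arXiv:2209.12037 — 5 statements merged into one kernel-verified Lean document; each statement's English description precedes it below -/
import Mathlib

section
/- Let m ≥ 1, ψ ∈ L²(ℝ^m, ℂ), f ∈ L²(ℝ^m, ℂ), and let T ⊆ ℝ^m and Ω ⊆ (0,∞)×ℝ^m be measurable sets. Then ‖1_Ω · T_ψ(1_T·f)‖²_{L²(μ)} ≤ ‖1_T·f‖²_{L²(ℝ^m)} · φ_{Ω,T}(ψ), where φ_{Ω,T}(ψ) = ∫_Ω (∫_{(T−b)/a} |ψ(t)|² dt) dμ(a,b). -/
open MeasureTheory Set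
open scoped ENNReal

/-- The continuous wavelet transform of `f` with respect to the wavelet `ψ`:
`T_ψ f (a, b) = a^(-m/2) ∫ f x * conj (ψ ((x - b) / a)) dx`. -/
noncomputable def waveletTransform (m : ℕ) (ψ f : EuclideanSpace ℝ (Fin m) → ℂ)
    (p : ℝ × EuclideanSpace ℝ (Fin m)) : ℂ :=
  ((p.1 ^ (-(m : ℝ) / 2) : ℝ) : ℂ) *
    ∫ x, f x * (starRingEnd ℂ) (ψ (p.1⁻¹ • (x - p.2)))

/-- The measure `dμ(a,b) = a^{-(m+1)} da db` on `(0,∞) × ℝ^m`, realized as a measure on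
`ℝ × ℝ^m` supported on `(0,∞) × ℝ^m`. -/
noncomputable def waveletMeasure (m : ℕ) : Measure (ℝ × EuclideanSpace ℝ (Fin m)) :=
  (((volume : Measure ℝ).restrict (Set.Ioi 0)).withDensity
    (fun a => ENNReal.ofReal (a ^ (-((m : ℝ) + 1))))).prod volume

/-- `φ_{Ω,T}(ψ) = ∫_Ω (∫_{(T-b)/a} |ψ t|² dt) dμ(a,b)`. -/
noncomputable def phiOmegaT (m : ℕ) (ψ : EuclideanSpace ℝ (Fin m) → ℂ)
    (Ω : Set (ℝ × EuclideanSpace ℝ (Fin m))) (T : Set (EuclideanSpace ℝ (Fin m))) : ℝ≥0∞ :=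
  ∫⁻ p in Ω, (∫⁻ t in (fun x => p.1⁻¹ • (x - p.2)) '' T, (‖ψ t‖₊ : ℝ≥0∞) ^ 2)
    ∂(waveletMeasure m)

section Helpers

variable {m : ℕ}


lemma wv_map_aff {a : ℝ} (ha : a ≠ 0) (b : EuclideanSpace ℝ (Fin m)) :
    Measure.map (fun x : EuclideanSpace ℝ (Fin m) => a⁻¹ • (x - b)) volume
      = ENNReal.ofReal (|a| ^ m) • volume := by
  have h1 : (fun x : EuclideanSpace ℝ (Fin m) => a⁻¹ • (x - b))
      = (a⁻¹ • ·) ∘ (· - b) := rfl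
  rw [h1, ← Measure.map_map (measurable_const_smul a⁻¹) (measurable_sub_const b),
    map_sub_right_eq_self volume b,
    Measure.map_addHaar_smul volume (inv_ne_zero ha)]
  congr 1
  rw [finrank_euclideanSpace_fin]
  rw [abs_inv, abs_pow, abs_inv, inv_pow, inv_inv]

lemma wv_qmp {a : ℝ} (ha : a ≠ 0) (b : EuclideanSpace ℝ (Fin m)) :
    Measure.QuasiMeasurePreserving
      (fun x : EuclideanSpace ℝ (Fin m) => a⁻¹ • (x - b)) volume volume := by
  refine ⟨(measurable_const_smul a⁻¹).comp (measurable_sub_const b), ?_⟩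
  rw [wv_map_aff ha b]
  exact (Measure.absolutelyContinuous_of_le_smul le_rfl)

lemma wv_lintegral_comp {a : ℝ} (ha : a ≠ 0) (b : EuclideanSpace ℝ (Fin m))
    {g : EuclideanSpace ℝ (Fin m) → ℝ≥0∞} (hg : AEMeasurable g volume) :
    ∫⁻ x, g (a⁻¹ • (x - b)) ∂volume = ENNReal.ofReal (|a| ^ m) * ∫⁻ t, g t ∂volume := by
  have h1 : AEMeasurable g (Measure.map (fun x : EuclideanSpace ℝ (Fin m) => a⁻¹ • (x - b)) volume) := by
    rw [wv_map_aff ha b]; exact hg.smul_measure _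
  rw [← lintegral_map' h1 ((measurable_const_smul a⁻¹).comp (measurable_sub_const b)).aemeasurable,
    wv_map_aff ha b, lintegral_smul_measure, smul_eq_mul]

lemma wv_image_eq {a : ℝ} (ha : a ≠ 0) (b : EuclideanSpace ℝ (Fin m))
    (T : Set (EuclideanSpace ℝ (Fin m))) :
    (fun x : EuclideanSpace ℝ (Fin m) => a⁻¹ • (x - b)) '' T
      = (fun t : EuclideanSpace ℝ (Fin m) => a • t + b) ⁻¹' T := by
  refine congrFun (Set.image_eq_preimage_of_inverse ?_ ?_) T
  · intro x; simp [smul_smul, mul_inv_cancel₀ ha]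
  · intro y; simp [smul_smul, inv_mul_cancel₀ ha]

lemma wv_setLintegral_comp {a : ℝ} (ha : a ≠ 0) (b : EuclideanSpace ℝ (Fin m))
    {g : EuclideanSpace ℝ (Fin m) → ℝ≥0∞} (hg : AEMeasurable g volume)
    {T : Set (EuclideanSpace ℝ (Fin m))} (hT : MeasurableSet T) :
    ∫⁻ x in T, g (a⁻¹ • (x - b)) ∂volume
      = ENNReal.ofReal (|a| ^ m) *
        ∫⁻ t in (fun x => a⁻¹ • (x - b)) '' T, g t ∂volume := by
  have himg : MeasurableSet ((fun x : EuclideanSpace ℝ (Fin m) => a⁻¹ • (x - b)) '' T) := by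
    rw [wv_image_eq ha b T]
    exact ((measurable_const_smul a).add_const b) hT
  have hind : AEMeasurable (((fun x => a⁻¹ • (x - b)) '' T).indicator g) volume :=
    hg.indicator himg
  have key : ∀ x, T.indicator (fun x => g (a⁻¹ • (x - b))) x
      = ((fun x => a⁻¹ • (x - b)) '' T).indicator g (a⁻¹ • (x - b)) := by
    intro x
    by_cases hx : x ∈ T
    · rw [Set.indicator_of_mem hx, Set.indicator_of_mem (Set.mem_image_of_mem _ hx)]
    · rw [Set.indicator_of_notMem hx, Set.indicator_of_notMem]
      intro ⟨y, hy, hxy⟩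
      have : y = x := by
        have := congrArg (fun z => a • z + b) hxy
        simpa [smul_smul, mul_inv_cancel₀ ha] using this
      exact hx (this ▸ hy)
  rw [← lintegral_indicator hT, ← lintegral_indicator himg]
  calc ∫⁻ x, T.indicator (fun x => g (a⁻¹ • (x - b))) x
      = ∫⁻ x, ((fun x => a⁻¹ • (x - b)) '' T).indicator g (a⁻¹ • (x - b)) := by
        simp_rw [key]
    _ = _ := wv_lintegral_comp ha b hind


lemma eLpNorm_two_sq {α : Type*} [MeasurableSpace α] {μ : Measure α} (g : α → ℂ) :
    (eLpNorm g 2 μ) ^ 2 = ∫⁻ x, (‖g x‖₊ : ℝ≥0∞) ^ 2 ∂μ := by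
  rw [eLpNorm_eq_lintegral_rpow_enorm_toReal two_ne_zero ENNReal.ofNat_ne_top]
  simp only [enorm_eq_nnnorm]
  rw [show ((2:ℝ≥0∞).toReal) = (2:ℝ) by norm_num]
  rw [← ENNReal.rpow_natCast _ 2, ← ENNReal.rpow_mul]
  norm_num

lemma wv_pointwise {ψ f : EuclideanSpace ℝ (Fin m) → ℂ}
    (hψ : AEStronglyMeasurable ψ (volume : Measure (EuclideanSpace ℝ (Fin m))))
    (hf : AEStronglyMeasurable f (volume : Measure (EuclideanSpace ℝ (Fin m))))
    {T : Set (EuclideanSpace ℝ (Fin m))} (hT : MeasurableSet T)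
    {a : ℝ} (ha : 0 < a) (b : EuclideanSpace ℝ (Fin m)) :
    (‖waveletTransform m ψ (T.indicator f) (a, b)‖₊ : ℝ≥0∞) ^ 2 ≤
      (∫⁻ x, (‖T.indicator f x‖₊ : ℝ≥0∞) ^ 2 ∂volume) *
        ∫⁻ t in (fun x => a⁻¹ • (x - b)) '' T, (‖ψ t‖₊ : ℝ≥0∞) ^ 2 ∂volume := by
  set g := T.indicator f with hg
  have hgm : AEStronglyMeasurable g volume := hf.indicator hT
  set F : EuclideanSpace ℝ (Fin m) → ℝ≥0∞ := fun x => (‖g x‖₊ : ℝ≥0∞) with hF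
  set G : EuclideanSpace ℝ (Fin m) → ℝ≥0∞ :=
    T.indicator (fun x => (‖ψ (a⁻¹ • (x - b))‖₊ : ℝ≥0∞)) with hG
  have hFm : AEMeasurable F volume := hgm.enorm
  have hψc : AEMeasurable (fun x => (‖ψ (a⁻¹ • (x - b))‖₊ : ℝ≥0∞)) volume :=
    hψ.enorm.comp_quasiMeasurePreserving (wv_qmp ha.ne' b)
  have hGm : AEMeasurable G volume := hψc.indicator hT
  -- Step 1 : bound the integral term
  have step1 : (‖∫ x, g x * (starRingEnd ℂ) (ψ (a⁻¹ • (x - b)))‖₊ : ℝ≥0∞)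
      ≤ (∫⁻ x, F x ^ (2:ℝ) ∂volume) ^ (1/2:ℝ) * (∫⁻ x, G x ^ (2:ℝ) ∂volume) ^ (1/2:ℝ) := by
    refine le_trans (enorm_integral_le_lintegral_enorm _) ?_
    have heq : ∀ x, (‖g x * (starRingEnd ℂ) (ψ (a⁻¹ • (x - b)))‖₊ : ℝ≥0∞) = (F * G) x := by
      intro x
      by_cases hx : x ∈ T
      · simp [hF, hG, Set.indicator_of_mem hx, nnnorm_mul, RCLike.nnnorm_conj,
          ENNReal.coe_mul]
      · simp [hF, hG, hg, Set.indicator_of_notMem hx]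
    calc ∫⁻ x, (‖g x * (starRingEnd ℂ) (ψ (a⁻¹ • (x - b)))‖₊ : ℝ≥0∞) ∂volume
        = ∫⁻ x, (F * G) x ∂volume := by simp_rw [heq]
      _ ≤ _ := ENNReal.lintegral_mul_le_Lp_mul_Lq volume Real.HolderConjugate.two_two hFm hGm
  -- Step 2 : compute ∫⁻ G^2
  have hG2 : ∫⁻ x, G x ^ (2:ℝ) ∂volume
      = ENNReal.ofReal (a ^ m) *
        ∫⁻ t in (fun x => a⁻¹ • (x - b)) '' T, (‖ψ t‖₊ : ℝ≥0∞) ^ 2 ∂volume := by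
    have : ∀ x, G x ^ (2:ℝ)
        = T.indicator (fun x => (‖ψ (a⁻¹ • (x - b))‖₊ : ℝ≥0∞) ^ 2) x := by
      intro x
      by_cases hx : x ∈ T
      · simp only [hG, Set.indicator_of_mem hx]
        rw [← ENNReal.rpow_natCast]; norm_num
      · simp [hG, Set.indicator_of_notMem hx, ENNReal.zero_rpow_of_pos two_pos]
    simp_rw [this]
    rw [lintegral_indicator hT,
      wv_setLintegral_comp ha.ne' b (g := fun t => (‖ψ t‖₊ : ℝ≥0∞) ^ 2) (hψ.enorm.pow_const 2) hT, abs_of_pos ha]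
  -- Step 3 : the prefactor
  have hpre : (‖(((a ^ (-(m:ℝ)/2) : ℝ)) : ℂ)‖₊ : ℝ≥0∞) ^ 2
      = ENNReal.ofReal (a ^ (-(m:ℝ))) := by
    rw [Complex.nnnorm_real, ← enorm_eq_nnnorm, Real.enorm_eq_ofReal (Real.rpow_nonneg ha.le _),
      ← ENNReal.ofReal_pow (Real.rpow_nonneg ha.le _)]
    congr 1
    rw [← Real.rpow_natCast (a ^ (-(m:ℝ)/2)) 2, ← Real.rpow_mul ha.le]
    norm_num
  -- Combine
  calc (‖waveletTransform m ψ g (a, b)‖₊ : ℝ≥0∞) ^ 2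
      = (‖(((a ^ (-(m:ℝ)/2) : ℝ)) : ℂ)‖₊ : ℝ≥0∞) ^ 2 *
          (‖∫ x, g x * (starRingEnd ℂ) (ψ (a⁻¹ • (x - b)))‖₊ : ℝ≥0∞) ^ 2 := by
        rw [waveletTransform]
        simp [nnnorm_mul, ENNReal.coe_mul, mul_pow]
    _ ≤ ENNReal.ofReal (a ^ (-(m:ℝ))) *
          (((∫⁻ x, F x ^ (2:ℝ) ∂volume) ^ (1/2:ℝ) * (∫⁻ x, G x ^ (2:ℝ) ∂volume) ^ (1/2:ℝ)) ^ 2) := by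
        rw [hpre]
        exact mul_le_mul_right (pow_le_pow_left' step1 2) _
    _ = ENNReal.ofReal (a ^ (-(m:ℝ))) *
          ((∫⁻ x, F x ^ (2:ℝ) ∂volume) * (∫⁻ x, G x ^ (2:ℝ) ∂volume)) := by
        congr 1
        rw [mul_pow, ← ENNReal.rpow_natCast (_ ^ (1/2:ℝ)), ← ENNReal.rpow_natCast (_ ^ (1/2:ℝ)),
          ← ENNReal.rpow_mul, ← ENNReal.rpow_mul]
        norm_num
    _ = _ := by
        rw [hG2]
        have hFeq : ∫⁻ x, F x ^ (2:ℝ) ∂volume = ∫⁻ x, (‖g x‖₊ : ℝ≥0∞) ^ 2 ∂volume := by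
          congr 1; ext x; rw [hF, ← ENNReal.rpow_natCast]; norm_num
        rw [hFeq]
        rw [show ENNReal.ofReal (a ^ (-(m:ℝ))) *
            ((∫⁻ x, (‖g x‖₊ : ℝ≥0∞) ^ 2 ∂volume) *
              (ENNReal.ofReal (a ^ m) * ∫⁻ t in (fun x => a⁻¹ • (x - b)) '' T, (‖ψ t‖₊ : ℝ≥0∞) ^ 2 ∂volume))
            = (ENNReal.ofReal (a ^ (-(m:ℝ))) * ENNReal.ofReal (a ^ m)) *
              ((∫⁻ x, (‖g x‖₊ : ℝ≥0∞) ^ 2 ∂volume) *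
                ∫⁻ t in (fun x => a⁻¹ • (x - b)) '' T, (‖ψ t‖₊ : ℝ≥0∞) ^ 2 ∂volume) by ring]
        rw [← ENNReal.ofReal_mul (Real.rpow_nonneg ha.le _)]
        rw [show a ^ (-(m:ℝ)) * a ^ m = 1 by
          rw [← Real.rpow_natCast a m, ← Real.rpow_add ha]; norm_num]
        simp


end Helpers

/-- Localization bound: `‖1_Ω · T_ψ(1_T·f)‖²_{L²(μ)} ≤ ‖1_T·f‖²_{L²} · φ_{Ω,T}(ψ)`. -/
theorem eLpNorm_localized_waveletTransform_sq_le
    (m : ℕ) (hm : 1 ≤ m)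
    (ψ f : EuclideanSpace ℝ (Fin m) → ℂ)
    (hψ : MemLp ψ 2 (volume : Measure (EuclideanSpace ℝ (Fin m))))
    (hf : MemLp f 2 (volume : Measure (EuclideanSpace ℝ (Fin m))))
    (T : Set (EuclideanSpace ℝ (Fin m))) (hT : MeasurableSet T)
    (Ω : Set (ℝ × EuclideanSpace ℝ (Fin m))) (hΩ : MeasurableSet Ω)
    (hΩ_sub : Ω ⊆ Set.Ioi (0 : ℝ) ×ˢ Set.univ) :
    (eLpNorm (Ω.indicator (waveletTransform m ψ (T.indicator f))) 2 (waveletMeasure m)) ^ 2 ≤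
      (eLpNorm (T.indicator f) 2 (volume : Measure (EuclideanSpace ℝ (Fin m)))) ^ 2 *
        phiOmegaT m ψ Ω T := by
  have hg : MemLp (T.indicator f) 2 (volume : Measure (EuclideanSpace ℝ (Fin m))) :=
    hf.indicator hT
  set N2 : ℝ≥0∞ := (eLpNorm (T.indicator f) 2 (volume : Measure (EuclideanSpace ℝ (Fin m)))) ^ 2
    with hN2
  have hN2top : N2 ≠ ⊤ := ENNReal.pow_ne_top hg.eLpNorm_lt_top.ne
  rw [eLpNorm_two_sq]
  have hind : ∀ p, (‖Ω.indicator (waveletTransform m ψ (T.indicator f)) p‖₊ : ℝ≥0∞) ^ 2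
      = Ω.indicator (fun p => (‖waveletTransform m ψ (T.indicator f) p‖₊ : ℝ≥0∞) ^ 2) p := by
    intro p; by_cases hp : p ∈ Ω <;> simp [hp]
  simp_rw [hind]
  rw [lintegral_indicator hΩ]
  calc ∫⁻ p in Ω, (‖waveletTransform m ψ (T.indicator f) p‖₊ : ℝ≥0∞) ^ 2 ∂(waveletMeasure m)
      ≤ ∫⁻ p in Ω, N2 * (∫⁻ t in (fun x => p.1⁻¹ • (x - p.2)) '' T, (‖ψ t‖₊ : ℝ≥0∞) ^ 2)
          ∂(waveletMeasure m) := by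
        refine setLIntegral_mono' hΩ fun p hp => ?_
        have hp1 : (0:ℝ) < p.1 := (hΩ_sub hp).1
        have := wv_pointwise hψ.aestronglyMeasurable hf.aestronglyMeasurable hT hp1 p.2
        rw [hN2, eLpNorm_two_sq]
        exact this
    _ = N2 * phiOmegaT m ψ Ω T := by
        rw [phiOmegaT, lintegral_const_mul' _ _ hN2top]
end

section
/- Let m ≥ 1, ψ ∈ L²(ℝ^m, ℂ), f ∈ L²(ℝ^m, ℂ), T ⊆ ℝ^m measurable, α > 0, and let Ω = [α, ∞) × Ω̃ where Ω̃ ⊆ ℝ^m has finite Lebesgue measure. Then ‖1_Ω · T_ψ(1_T·f)‖_{L²(μ)} ≤ ‖1_T·f‖_{L²(ℝ^m)} · ‖ψ‖_{L²(ℝ^m)} · (|Ω̃| / (m α^m))^{1/2}, where |Ω̃| is the Lebesgue measure of Ω̃. -/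
open MeasureTheory Set
open scoped ENNReal

lemma map_affine_volume (m : ℕ) {a : ℝ} (ha : 0 < a) (b : EuclideanSpace ℝ (Fin m)) :
    Measure.map (fun x => a⁻¹ • (x - b)) (volume : Measure (EuclideanSpace ℝ (Fin m)))
      = ENNReal.ofReal (a ^ m) • volume := by
  have h1 : (fun x : EuclideanSpace ℝ (Fin m) => a⁻¹ • (x - b))
      = (fun y : EuclideanSpace ℝ (Fin m) => a⁻¹ • y) ∘ (fun x => x - b) := rfl
  rw [h1, ← Measure.map_map (measurable_const_smul _) (measurable_sub_const b),
    (measurePreserving_sub_right volume b).map_eq,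
    Measure.map_addHaar_smul volume (inv_ne_zero ha.ne')]
  congr 1
  rw [finrank_euclideanSpace_fin, inv_pow, inv_inv, abs_of_nonneg (by positivity)]

lemma lintegral_comp_affine (m : ℕ) (F : EuclideanSpace ℝ (Fin m) → ℝ≥0∞)
    (hF : AEMeasurable F (volume : Measure (EuclideanSpace ℝ (Fin m))))
    {a : ℝ} (ha : 0 < a) (b : EuclideanSpace ℝ (Fin m)) :
    ∫⁻ x, F (a⁻¹ • (x - b)) = ENNReal.ofReal (a ^ m) * ∫⁻ x, F x := by
  have hmap := map_affine_volume m ha b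
  have hmeas : AEMeasurable (fun x : EuclideanSpace ℝ (Fin m) => a⁻¹ • (x - b)) volume :=
    ((measurable_const_smul a⁻¹).comp (measurable_sub_const b)).aemeasurable
  rw [← lintegral_map' (hmap ▸ hF.smul_measure _) hmeas, hmap, lintegral_smul_measure, smul_eq_mul]

lemma pointwise_bound (m : ℕ) (ψ g : EuclideanSpace ℝ (Fin m) → ℂ)
    (hψ : MemLp ψ 2 (volume : Measure (EuclideanSpace ℝ (Fin m))))
    (hg : MemLp g 2 (volume : Measure (EuclideanSpace ℝ (Fin m))))
    {a : ℝ} (ha : 0 < a) (b : EuclideanSpace ℝ (Fin m)) :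
    (‖waveletTransform m ψ g (a, b)‖₊ : ℝ≥0∞) ≤
      eLpNorm g 2 volume * eLpNorm ψ 2 volume := by
  set e : EuclideanSpace ℝ (Fin m) → EuclideanSpace ℝ (Fin m) := fun x => a⁻¹ • (x - b) with he
  have hq : Measure.QuasiMeasurePreserving e volume volume := by
    refine ⟨(measurable_const_smul a⁻¹).comp (measurable_sub_const b), ?_⟩
    rw [map_affine_volume m ha b]
    exact Measure.smul_absolutelyContinuous
  have hψe : AEMeasurable (fun x => (‖ψ (e x)‖₊ : ℝ≥0∞)) volume :=
    (hψ.aestronglyMeasurable.aemeasurable.comp_quasiMeasurePreserving hq).enorm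
  have hge : AEMeasurable (fun x => (‖g x‖₊ : ℝ≥0∞)) volume :=
    hg.aestronglyMeasurable.aemeasurable.enorm
  have hid : ∀ x : ℝ≥0∞, x ^ (2 : ℝ) = x ^ (2 : ℕ) := fun x => by
    rw [← ENNReal.rpow_natCast]; norm_num
  have hψm : AEMeasurable (fun y => (‖ψ y‖₊ : ℝ≥0∞) ^ (2 : ℝ)) volume := by
    simp only [hid]
    exact hψ.aestronglyMeasurable.aemeasurable.enorm.pow_const 2
  -- Cauchy-Schwarz (Hölder)
  have hpq : Real.HolderConjugate 2 2 := Real.HolderConjugate.two_two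
  have holder := ENNReal.lintegral_mul_le_Lp_mul_Lq volume hpq hge hψe
  have hint : (‖∫ x, g x * (starRingEnd ℂ) (ψ (e x))‖₊ : ℝ≥0∞) ≤
      ∫⁻ x, (‖g x‖₊ : ℝ≥0∞) * (‖ψ (e x)‖₊ : ℝ≥0∞) := by
    refine le_trans (enorm_integral_le_lintegral_enorm _) (le_of_eq ?_)
    congr 1 with x
    rw [enorm_eq_nnnorm, nnnorm_mul, RCLike.nnnorm_conj, ENNReal.coe_mul]
  -- change of variables for the ψ integral
  have hcov : ∫⁻ x, (‖ψ (e x)‖₊ : ℝ≥0∞) ^ (2 : ℝ) =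
      ENNReal.ofReal (a ^ m) * ∫⁻ y, (‖ψ y‖₊ : ℝ≥0∞) ^ (2 : ℝ) :=
    lintegral_comp_affine m (fun y => (‖ψ y‖₊ : ℝ≥0∞) ^ (2 : ℝ)) hψm ha b
  have hA : (∫⁻ x, (‖g x‖₊ : ℝ≥0∞) ^ (2 : ℝ)) ^ (1/2 : ℝ) = eLpNorm g 2 volume := by
    rw [eLpNorm_eq_lintegral_rpow_enorm_toReal (by norm_num) (by norm_num)]
    norm_num
    rfl
  have hB : (∫⁻ y, (‖ψ y‖₊ : ℝ≥0∞) ^ (2 : ℝ)) ^ (1/2 : ℝ) = eLpNorm ψ 2 volume := by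
    rw [eLpNorm_eq_lintegral_rpow_enorm_toReal (by norm_num) (by norm_num)]
    norm_num
    rfl
  have hwt : waveletTransform m ψ g (a, b) =
      ((a ^ (-(m : ℝ) / 2) : ℝ) : ℂ) * ∫ x, g x * (starRingEnd ℂ) (ψ (e x)) := rfl
  rw [hwt, nnnorm_mul, ENNReal.coe_mul]
  have hcoe : (‖((a ^ (-(m : ℝ) / 2) : ℝ) : ℂ)‖₊ : ℝ≥0∞) =
      ENNReal.ofReal a ^ (-(m : ℝ) / 2) := by
    rw [ENNReal.ofReal_rpow_of_pos ha, ← Real.enorm_eq_ofReal (Real.rpow_nonneg ha.le _)]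
    simp
    rfl
  calc (‖((a ^ (-(m : ℝ) / 2) : ℝ) : ℂ)‖₊ : ℝ≥0∞) * ‖∫ x, g x * (starRingEnd ℂ) (ψ (e x))‖₊
      ≤ ENNReal.ofReal a ^ (-(m : ℝ) / 2) *
        ((∫⁻ x, (‖g x‖₊ : ℝ≥0∞) ^ (2 : ℝ)) ^ (1/2 : ℝ) *
          (∫⁻ x, (‖ψ (e x)‖₊ : ℝ≥0∞) ^ (2 : ℝ)) ^ (1/2 : ℝ)) := by
        rw [hcoe]
        refine mul_le_mul_right (hint.trans ?_) _
        simpa [Pi.mul_apply] using holder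
    _ = eLpNorm g 2 volume * eLpNorm ψ 2 volume := by
        rw [hcov, ENNReal.mul_rpow_of_nonneg _ _ (by norm_num : (0:ℝ) ≤ 1/2), hA, hB]
        have h1 : ENNReal.ofReal (a ^ m) ^ (1/2 : ℝ) = ENNReal.ofReal a ^ ((m : ℝ)/2) := by
          rw [ENNReal.ofReal_rpow_of_pos (pow_pos ha m), ENNReal.ofReal_rpow_of_pos ha]
          congr 1
          rw [← Real.rpow_natCast a m, ← Real.rpow_mul ha.le]
          ring_nf
        rw [h1]
        have h2 : ENNReal.ofReal a ^ (-(m : ℝ) / 2) * (eLpNorm g 2 volume *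
            (ENNReal.ofReal a ^ ((m : ℝ)/2) * eLpNorm ψ 2 volume)) =
            (ENNReal.ofReal a ^ (-(m : ℝ) / 2) * ENNReal.ofReal a ^ ((m : ℝ)/2)) *
              (eLpNorm g 2 volume * eLpNorm ψ 2 volume) := by ring
        rw [h2, ← ENNReal.rpow_add _ _ (by simpa using ha) ENNReal.ofReal_ne_top,
          show (-(m : ℝ) / 2 + (m : ℝ) / 2) = 0 by ring, ENNReal.rpow_zero, one_mul]

lemma waveletMeasure_band (m : ℕ) (hm : 1 ≤ m) {α : ℝ} (hα : 0 < α)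
    (Ωt : Set (EuclideanSpace ℝ (Fin m))) :
    waveletMeasure m (Set.Ici α ×ˢ Ωt) = volume Ωt / ENNReal.ofReal (m * α ^ m) := by
  have hm' : (1 : ℝ) ≤ m := by exact_mod_cast hm
  have hlt : -((m : ℝ) + 1) < -1 := by linarith
  rw [waveletMeasure, Measure.prod_prod]
  have h1 : (((volume : Measure ℝ).restrict (Set.Ioi 0)).withDensity
      (fun a => ENNReal.ofReal (a ^ (-((m : ℝ) + 1))))) (Set.Ici α) =
      (ENNReal.ofReal (m * α ^ m))⁻¹ := by
    rw [withDensity_apply _ measurableSet_Ici, Measure.restrict_restrict measurableSet_Ici]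
    have hsub : Set.Ici α ∩ Set.Ioi 0 = Set.Ici α :=
      Set.inter_eq_left.mpr (fun x hx => lt_of_lt_of_le hα hx)
    rw [hsub, ← Measure.restrict_congr_set Ioi_ae_eq_Ici]
    have hint : IntegrableOn (fun a : ℝ => a ^ (-((m : ℝ) + 1))) (Set.Ioi α) :=
      integrableOn_Ioi_rpow_of_lt hlt hα
    have hnn : 0 ≤ᵐ[(volume : Measure ℝ).restrict (Set.Ioi α)]
        (fun a : ℝ => a ^ (-((m : ℝ) + 1))) := by
      filter_upwards [ae_restrict_mem measurableSet_Ioi] with x hx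
      have : (0 : ℝ) < x := lt_trans hα hx
      positivity
    rw [← ofReal_integral_eq_lintegral_ofReal hint hnn,
      integral_Ioi_rpow_of_lt hlt hα]
    have hmpos : (0 : ℝ) < m * α ^ m := by positivity
    rw [← ENNReal.ofReal_inv_of_pos hmpos]
    congr 1
    have he : -((m : ℝ) + 1) + 1 = -(m : ℝ) := by ring
    rw [he, Real.rpow_neg hα.le, Real.rpow_natCast, mul_inv]
    have hm0 : (m : ℝ) ≠ 0 := by positivity
    field_simp
  rw [h1, div_eq_mul_inv, mul_comm]


/-- Band-limiting bound: for `Ω = [α,∞) × Ω̃` with `Ω̃` of finite Lebesgue measure,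
`‖1_Ω · T_ψ(1_T·f)‖_{L²(μ)} ≤ ‖1_T·f‖_{L²} · ‖ψ‖_{L²} · (|Ω̃| / (m α^m))^{1/2}`. -/
theorem eLpNorm_band_localized_waveletTransform_le
    (m : ℕ) (hm : 1 ≤ m)
    (ψ f : EuclideanSpace ℝ (Fin m) → ℂ)
    (hψ : MemLp ψ 2 (volume : Measure (EuclideanSpace ℝ (Fin m))))
    (hf : MemLp f 2 (volume : Measure (EuclideanSpace ℝ (Fin m))))
    (T : Set (EuclideanSpace ℝ (Fin m))) (hT : MeasurableSet T)
    (α : ℝ) (hα : 0 < α)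
    (Ωt : Set (EuclideanSpace ℝ (Fin m))) (hΩt : MeasurableSet Ωt)
    (hΩt_fin : volume Ωt < ∞) :
    eLpNorm ((Set.Ici α ×ˢ Ωt).indicator (waveletTransform m ψ (T.indicator f))) 2
        (waveletMeasure m) ≤
      eLpNorm (T.indicator f) 2 (volume : Measure (EuclideanSpace ℝ (Fin m))) *
        eLpNorm ψ 2 (volume : Measure (EuclideanSpace ℝ (Fin m))) *
          (volume Ωt / ENNReal.ofReal (m * α ^ m)) ^ (1 / 2 : ℝ) := by
  set g := T.indicator f with hgdef
  have hg : MemLp g 2 (volume : Measure (EuclideanSpace ℝ (Fin m))) := hf.indicator hT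
  set S := Set.Ici α ×ˢ Ωt with hSdef
  have hS : MeasurableSet S := measurableSet_Ici.prod hΩt
  set C := eLpNorm g 2 volume * eLpNorm ψ 2 volume with hCdef
  have key : ∫⁻ p, (‖S.indicator (waveletTransform m ψ g) p‖₊ : ℝ≥0∞) ^ (2 : ℝ)
      ∂(waveletMeasure m) ≤ C ^ (2 : ℝ) * waveletMeasure m S := by
    have heq : ∀ p, (‖S.indicator (waveletTransform m ψ g) p‖₊ : ℝ≥0∞) ^ (2 : ℝ) =
        S.indicator (fun p => (‖waveletTransform m ψ g p‖₊ : ℝ≥0∞) ^ (2 : ℝ)) p := by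
      intro p
      by_cases hp : p ∈ S <;>
        simp [hp, ENNReal.zero_rpow_of_pos (by norm_num : (0:ℝ) < 2)]
    simp only [heq]
    rw [lintegral_indicator hS]
    have hbd : ∀ p ∈ S, (‖waveletTransform m ψ g p‖₊ : ℝ≥0∞) ^ (2 : ℝ) ≤ C ^ (2 : ℝ) := by
      rintro ⟨a, b⟩ ⟨hpa, -⟩
      exact ENNReal.rpow_le_rpow
        (pointwise_bound m ψ g hψ hg (lt_of_lt_of_le hα hpa) b) (by norm_num)
    refine le_trans (setLIntegral_mono measurable_const hbd) ?_
    rw [setLIntegral_const]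
  have hmono : eLpNorm (S.indicator (waveletTransform m ψ g)) 2 (waveletMeasure m) ≤
      (C ^ (2 : ℝ) * waveletMeasure m S) ^ (1/2 : ℝ) := by
    rw [eLpNorm_eq_lintegral_rpow_enorm_toReal (by norm_num) (by norm_num)]
    simp only [ENNReal.toReal_ofNat]
    exact ENNReal.rpow_le_rpow key (by norm_num)
  refine hmono.trans (le_of_eq ?_)
  rw [ENNReal.mul_rpow_of_nonneg _ _ (by norm_num : (0:ℝ) ≤ 1/2), ← ENNReal.rpow_mul,
    show (2 : ℝ) * (1/2) = 1 by norm_num, ENNReal.rpow_one,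
    waveletMeasure_band m hm hα Ωt]
end

section
/- Let m ≥ 1, ψ ∈ L²(ℝ^m, ℂ), f ∈ L²(ℝ^m, ℂ), T ⊆ ℝ^m and Ω ⊆ (0,∞)×ℝ^m measurable, and ε_T, ε_Ω ≥ 0. Assume the Parseval identity ‖T_ψ(g)‖_{L²(μ)} = A_ψ · ‖g‖_{L²(ℝ^m)} holds for every g ∈ L²(ℝ^m, ℂ), where A_ψ > 0 is a constant. If f is ε_T-concentrated on T in L²(ℝ^m) and T_ψ(f) is ε_Ω-concentrated on Ω in L²(μ), then ‖T_ψ(f) − 1_Ω · T_ψ(1_T·f)‖_{L²(μ)} ≤ ε_Ω · ‖T_ψ(f)‖_{L²(μ)} + A_ψ · ε_T · ‖f‖_{L²(ℝ^m)}. -/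
open MeasureTheory Set
open scoped ENNReal

lemma wavelet_ae_pos (m : ℕ) : ∀ᵐ p ∂(waveletMeasure m), (0:ℝ) < p.1 := by
  rw [ae_iff]
  have hset : {p : ℝ × EuclideanSpace ℝ (Fin m) | ¬ (0:ℝ) < p.1}
      = Set.Iic 0 ×ˢ (Set.univ : Set (EuclideanSpace ℝ (Fin m))) := by
    ext p; simp [not_lt]
  rw [hset, waveletMeasure, Measure.prod_prod]
  have h1 : (((volume : Measure ℝ).restrict (Set.Ioi 0)).withDensity
      (fun a => ENNReal.ofReal (a ^ (-((m : ℝ) + 1))))) (Set.Iic 0) = 0 := by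
    rw [withDensity_apply _ measurableSet_Iic, Measure.restrict_restrict measurableSet_Iic,
      Set.Iic_inter_Ioi]
    simp
  rw [h1, zero_mul]

lemma memℒp_comp_affine {m : ℕ} {ψ : EuclideanSpace ℝ (Fin m) → ℂ}
    (hψ : MemLp ψ 2 (volume : Measure (EuclideanSpace ℝ (Fin m))))
    {a : ℝ} (ha : a ≠ 0) (b : EuclideanSpace ℝ (Fin m)) :
    MemLp (fun x => ψ (a⁻¹ • (x - b))) 2 (volume : Measure (EuclideanSpace ℝ (Fin m))) := by
  have hmeas : Measurable (fun x : EuclideanSpace ℝ (Fin m) => a⁻¹ • (x - b)) :=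
    (measurable_id.sub_const b).const_smul a⁻¹
  have hmap : Measure.map (fun x : EuclideanSpace ℝ (Fin m) => a⁻¹ • (x - b)) volume
      = ENNReal.ofReal |(a⁻¹ ^ Module.finrank ℝ (EuclideanSpace ℝ (Fin m)))⁻¹| • volume := by
    have hco : (fun x : EuclideanSpace ℝ (Fin m) => a⁻¹ • (x - b))
        = (fun y : EuclideanSpace ℝ (Fin m) => a⁻¹ • y) ∘ (fun x => x - b) := rfl
    rw [hco, ← Measure.map_map (measurable_const_smul a⁻¹)
        (by fun_prop : Measurable (fun x : EuclideanSpace ℝ (Fin m) => x - b)),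
      (measurePreserving_sub_right volume b).map_eq,
      Measure.map_addHaar_smul volume (inv_ne_zero ha)]
  have h2 : MemLp ψ 2
      (Measure.map (fun x : EuclideanSpace ℝ (Fin m) => a⁻¹ • (x - b)) volume) := by
    rw [hmap]; exact hψ.smul_measure ENNReal.ofReal_ne_top
  exact h2.comp_of_map hmeas.aemeasurable

lemma qmp_affine {m : ℕ} {a : ℝ} (ha : a ≠ 0) (b : EuclideanSpace ℝ (Fin m)) :
    Measure.QuasiMeasurePreserving (fun x : EuclideanSpace ℝ (Fin m) => a⁻¹ • (x - b))
      volume volume :=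
  (Measure.quasiMeasurePreserving_smul volume (inv_ne_zero ha)).comp
    (measurePreserving_sub_right volume b).quasiMeasurePreserving

lemma integrable_wavelet_kernel {m : ℕ} {ψ g : EuclideanSpace ℝ (Fin m) → ℂ}
    (hg : MemLp g 2 (volume : Measure (EuclideanSpace ℝ (Fin m))))
    (hψ : MemLp ψ 2 (volume : Measure (EuclideanSpace ℝ (Fin m))))
    {a : ℝ} (ha : a ≠ 0) (b : EuclideanSpace ℝ (Fin m)) :
    Integrable (fun x => g x * (starRingEnd ℂ) (ψ (a⁻¹ • (x - b))))
      (volume : Measure (EuclideanSpace ℝ (Fin m))) := by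
  have h1 : MemLp (fun x => (starRingEnd ℂ) (ψ (a⁻¹ • (x - b)))) 2
      (volume : Measure (EuclideanSpace ℝ (Fin m))) :=
by
    have h0 := memℒp_comp_affine hψ ha b
    refine ⟨Complex.continuous_conj.comp_aestronglyMeasurable h0.1, ?_⟩
    have : eLpNorm (fun x => (starRingEnd ℂ) (ψ (a⁻¹ • (x - b)))) 2
        (volume : Measure (EuclideanSpace ℝ (Fin m)))
        = eLpNorm (fun x => ψ (a⁻¹ • (x - b))) 2 volume := by
      apply eLpNorm_congr_norm_ae
      filter_upwards with x
      simp
    rw [this]; exact h0.2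
  have hpqr : (1 : ℝ≥0∞) / 1 = 1 / 2 + 1 / 2 := by
    rw [ENNReal.add_halves, one_div_one]
  have h2 : MemLp ((fun x => (starRingEnd ℂ) (ψ (a⁻¹ • (x - b)))) • g) 1
      (volume : Measure (EuclideanSpace ℝ (Fin m))) := hg.smul h1
  rw [← memLp_one_iff_integrable]
  have heq : (fun x => g x * (starRingEnd ℂ) (ψ (a⁻¹ • (x - b))))
      = (fun x => (starRingEnd ℂ) (ψ (a⁻¹ • (x - b)))) • g := by
    funext x; simp [Pi.smul_apply, smul_eq_mul, mul_comm]
  rw [heq]; exact h2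

lemma wavelet_split {m : ℕ} {ψ f : EuclideanSpace ℝ (Fin m) → ℂ}
    (hψ : MemLp ψ 2 (volume : Measure (EuclideanSpace ℝ (Fin m))))
    (hf : MemLp f 2 (volume : Measure (EuclideanSpace ℝ (Fin m))))
    {T : Set (EuclideanSpace ℝ (Fin m))} (hT : MeasurableSet T)
    {p : ℝ × EuclideanSpace ℝ (Fin m)} (hp : (0:ℝ) < p.1) :
    waveletTransform m ψ f p =
      waveletTransform m ψ (T.indicator f) p + waveletTransform m ψ (Tᶜ.indicator f) p := by
  unfold waveletTransform
  rw [← mul_add, ← integral_add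
    (integrable_wavelet_kernel (hf.indicator hT) hψ hp.ne' p.2)
    (integrable_wavelet_kernel (hf.indicator hT.compl) hψ hp.ne' p.2)]
  congr 1
  apply integral_congr_ae
  filter_upwards with x
  by_cases hx : x ∈ T <;>
    simp [Set.indicator_of_mem, Set.indicator_of_notMem, hx, add_mul]

lemma aesm_wavelet {m : ℕ} {ψ f : EuclideanSpace ℝ (Fin m) → ℂ}
    (hψ : AEStronglyMeasurable ψ (volume : Measure (EuclideanSpace ℝ (Fin m))))
    (hf : AEStronglyMeasurable f (volume : Measure (EuclideanSpace ℝ (Fin m)))) :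
    AEStronglyMeasurable (waveletTransform m ψ f) (waveletMeasure m) := by
  set ψ' := hψ.mk ψ with hψ'def
  set f' := hf.mk f with hf'def
  have hψ'm : StronglyMeasurable ψ' := hψ.stronglyMeasurable_mk
  have hf'm : StronglyMeasurable f' := hf.stronglyMeasurable_mk
  have hker : Measurable (fun q : (ℝ × EuclideanSpace ℝ (Fin m)) × EuclideanSpace ℝ (Fin m) =>
      q.1.1⁻¹ • (q.2 - q.1.2)) := by fun_prop
  have hinteg : StronglyMeasurable
      (fun q : (ℝ × EuclideanSpace ℝ (Fin m)) × EuclideanSpace ℝ (Fin m) =>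
        f' q.2 * (starRingEnd ℂ) (ψ' (q.1.1⁻¹ • (q.2 - q.1.2)))) := by
    apply StronglyMeasurable.mul
    · exact hf'm.comp_measurable measurable_snd
    · exact Complex.continuous_conj.comp_stronglyMeasurable (hψ'm.comp_measurable hker)
  have hint : StronglyMeasurable (fun p : ℝ × EuclideanSpace ℝ (Fin m) =>
      ∫ x, f' x * (starRingEnd ℂ) (ψ' (p.1⁻¹ • (x - p.2)))) :=
    hinteg.integral_prod_right'
  have hW' : StronglyMeasurable (waveletTransform m ψ' f') := by
    apply StronglyMeasurable.mul ?_ hint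
    apply Measurable.stronglyMeasurable
    fun_prop
  refine ⟨waveletTransform m ψ' f', hW', ?_⟩
  filter_upwards [wavelet_ae_pos m] with p hp
  unfold waveletTransform
  congr 1
  apply integral_congr_ae
  have h1 : (fun x => ψ (p.1⁻¹ • (x - p.2)))
      =ᵐ[(volume : Measure (EuclideanSpace ℝ (Fin m)))]
      (fun x => ψ' (p.1⁻¹ • (x - p.2))) :=
    (qmp_affine hp.ne' p.2).ae_eq_comp hψ.ae_eq_mk
  filter_upwards [hf.ae_eq_mk, h1] with x hx1 hx2
  rw [hx1, hx2]

/-- Triangle-inequality step in Donoho–Stark for the wavelet transform: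
`‖T_ψ f − 1_Ω · T_ψ(1_T·f)‖_{L²(μ)} ≤ ε_Ω ‖T_ψ f‖_{L²(μ)} + A_ψ ε_T ‖f‖_{L²}`. -/
theorem eLpNorm_waveletTransform_sub_localized_le
    (m : ℕ) (hm : 1 ≤ m)
    (ψ f : EuclideanSpace ℝ (Fin m) → ℂ)
    (hψ : MemLp ψ 2 (volume : Measure (EuclideanSpace ℝ (Fin m))))
    (hf : MemLp f 2 (volume : Measure (EuclideanSpace ℝ (Fin m))))
    (T : Set (EuclideanSpace ℝ (Fin m))) (hT : MeasurableSet T)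
    (Ω : Set (ℝ × EuclideanSpace ℝ (Fin m))) (hΩ : MeasurableSet Ω)
    (hΩ_sub : Ω ⊆ Set.Ioi (0 : ℝ) ×ˢ Set.univ)
    (εT εΩ : ℝ) (hεT : 0 ≤ εT) (hεΩ : 0 ≤ εΩ)
    (Aψ : ℝ) (hAψ : 0 < Aψ)
    (hParseval : ∀ g : EuclideanSpace ℝ (Fin m) → ℂ,
      MemLp g 2 (volume : Measure (EuclideanSpace ℝ (Fin m))) →
        eLpNorm (waveletTransform m ψ g) 2 (waveletMeasure m) =
          ENNReal.ofReal Aψ * eLpNorm g 2 (volume : Measure (EuclideanSpace ℝ (Fin m))))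
    (hconcT : eLpNorm (Tᶜ.indicator f) 2 (volume : Measure (EuclideanSpace ℝ (Fin m)))
      ≤ ENNReal.ofReal εT * eLpNorm f 2 (volume : Measure (EuclideanSpace ℝ (Fin m))))
    (hconcΩ : eLpNorm (Ωᶜ.indicator (waveletTransform m ψ f)) 2 (waveletMeasure m)
      ≤ ENNReal.ofReal εΩ * eLpNorm (waveletTransform m ψ f) 2 (waveletMeasure m)) :
    eLpNorm (fun p => waveletTransform m ψ f p -
        Ω.indicator (waveletTransform m ψ (T.indicator f)) p) 2 (waveletMeasure m) ≤
      ENNReal.ofReal εΩ * eLpNorm (waveletTransform m ψ f) 2 (waveletMeasure m) +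
        ENNReal.ofReal Aψ * ENNReal.ofReal εT *
          eLpNorm f 2 (volume : Measure (EuclideanSpace ℝ (Fin m))) := by
  have hfTc : MemLp (Tᶜ.indicator f) 2 (volume : Measure (EuclideanSpace ℝ (Fin m))) :=
    hf.indicator hT.compl
  have hF : AEStronglyMeasurable (waveletTransform m ψ f) (waveletMeasure m) :=
    aesm_wavelet hψ.aestronglyMeasurable hf.aestronglyMeasurable
  have hH : AEStronglyMeasurable (waveletTransform m ψ (Tᶜ.indicator f)) (waveletMeasure m) :=
    aesm_wavelet hψ.aestronglyMeasurable hfTc.aestronglyMeasurable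
  have hae : (fun p => waveletTransform m ψ f p -
        Ω.indicator (waveletTransform m ψ (T.indicator f)) p)
      =ᵐ[waveletMeasure m]
      (fun p => Ωᶜ.indicator (waveletTransform m ψ f) p +
        Ω.indicator (waveletTransform m ψ (Tᶜ.indicator f)) p) := by
    filter_upwards [wavelet_ae_pos m] with p hp
    have hsplit := wavelet_split hψ hf hT hp (T := T)
    by_cases hpΩ : p ∈ Ω
    · have hpΩc : p ∉ Ωᶜ := fun h => h hpΩ
      simp only [Set.indicator_of_mem hpΩ, Set.indicator_of_notMem hpΩc, zero_add]
      rw [hsplit]; ring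
    · have hpΩc : p ∈ Ωᶜ := hpΩ
      simp only [Set.indicator_of_notMem hpΩ, Set.indicator_of_mem hpΩc, add_zero, sub_zero]
  rw [eLpNorm_congr_ae hae]
  refine (eLpNorm_add_le (hF.indicator hΩ.compl) (hH.indicator hΩ) one_le_two).trans ?_
  refine add_le_add hconcΩ ?_
  calc eLpNorm (Ω.indicator (waveletTransform m ψ (Tᶜ.indicator f))) 2 (waveletMeasure m)
      ≤ eLpNorm (waveletTransform m ψ (Tᶜ.indicator f)) 2 (waveletMeasure m) :=
        eLpNorm_indicator_le _
    _ = ENNReal.ofReal Aψ * eLpNorm (Tᶜ.indicator f) 2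
          (volume : Measure (EuclideanSpace ℝ (Fin m))) := hParseval _ hfTc
    _ ≤ ENNReal.ofReal Aψ * (ENNReal.ofReal εT * eLpNorm f 2
          (volume : Measure (EuclideanSpace ℝ (Fin m)))) := mul_le_mul_right hconcT _
    _ = ENNReal.ofReal Aψ * ENNReal.ofReal εT * eLpNorm f 2
          (volume : Measure (EuclideanSpace ℝ (Fin m))) := (mul_assoc _ _ _).symm
end

section
/- Let m ≥ 1, ψ ∈ L²(ℝ^m, ℂ), f ∈ L¹(ℝ^m, ℂ) ∩ L²(ℝ^m, ℂ), T ⊆ ℝ^m and Ω ⊆ (0,∞)×ℝ^m measurable, and ε_T ≥ 0, 0 ≤ ε_Ω < 1. Assume the Parseval identity ‖T_ψ(g)‖_{L²(μ)} = A_ψ · ‖g‖_{L²(ℝ^m)} holds for every g ∈ L²(ℝ^m, ℂ), where A_ψ > 0 is a constant. If f is ε_T-concentrated on T in L²(ℝ^m) and T_ψ(f) is ε_Ω-concentrated on Ω in L²(μ), then ‖T_ψ(f)‖_{L²(μ)} ≤ (A_ψ ε_T + φ_{Ω,T}(ψ)^{1/2}) / (1 − ε_Ω) · ‖f‖_{L²(ℝ^m)},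 where φ_{Ω,T}(ψ) = ∫_Ω (∫_{(T−b)/a} |ψ(t)|² dt) dμ(a,b). -/
open MeasureTheory Set
open scoped ENNReal

section
variable {m : ℕ}
local notation "E" => EuclideanSpace ℝ (Fin m)

/-- The affine measurable equivalence `x ↦ a⁻¹ • (x - b)`. -/
noncomputable def waveEquiv (a : ℝ) (ha : a ≠ 0) (b : E) : E ≃ᵐ E :=
  (MeasurableEquiv.subRight b).trans
    (Homeomorph.smulOfNeZero (a⁻¹) (inv_ne_zero ha)).toMeasurableEquiv

lemma waveEquiv_apply (a : ℝ) (ha : a ≠ 0) (b x : E) :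
    waveEquiv a ha b x = a⁻¹ • (x - b) := rfl

lemma waveEquiv_map (a : ℝ) (ha : 0 < a) (b : E) :
    Measure.map (waveEquiv a ha.ne' b) (volume : Measure E)
      = ENNReal.ofReal (a ^ m) • (volume : Measure E) := by
  ext s hs
  rw [MeasurableEquiv.map_apply]
  have h1 : ⇑(waveEquiv a ha.ne' b) ⁻¹' s = (· - b) ⁻¹' ((a⁻¹ • ·) ⁻¹' s) := rfl
  rw [h1]
  have h2 : MeasurableSet ((a⁻¹ • · : E → E) ⁻¹' s) :=
    (measurable_const_smul a⁻¹) hs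
  rw [(measurePreserving_sub_right (volume : Measure E) b).measure_preimage h2.nullMeasurableSet]
  rw [Measure.addHaar_preimage_smul _ (inv_ne_zero ha.ne') s]
  have : |((a⁻¹) ^ Module.finrank ℝ E)⁻¹| = a ^ m := by
    rw [finrank_euclideanSpace_fin, ← inv_pow, inv_inv, abs_pow, abs_of_pos ha]
  rw [this, Measure.smul_apply, smul_eq_mul]
end

section
variable {m : ℕ}
local notation "E" => EuclideanSpace ℝ (Fin m)

lemma waveEquiv_null (a : ℝ) (ha : 0 < a) (b : E) {N : Set E} (hN : volume N = 0) :
    volume (⇑(waveEquiv a ha.ne' b) ⁻¹' N) = 0 := by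
  have := waveEquiv_map a ha b
  rw [← MeasurableEquiv.map_apply, this, Measure.smul_apply, smul_eq_mul, hN, mul_zero]

lemma waveEquiv_qmp (a : ℝ) (ha : 0 < a) (b : E) :
    Measure.QuasiMeasurePreserving (⇑(waveEquiv a ha.ne' b)) (volume : Measure E) volume :=
  ⟨(waveEquiv a ha.ne' b).measurable,
    Measure.AbsolutelyContinuous.mk fun s hsm hs => by
      rw [MeasurableEquiv.map_apply]; exact waveEquiv_null a ha b hs⟩

/-- Change of variables for lower integrals over the set `T`. -/
lemma lintegral_waveEquiv (a : ℝ) (ha : 0 < a) (b : E) (T : Set E) (hT : MeasurableSet T)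
    (g : E → ℝ≥0∞) :
    ∫⁻ x in T, g (a⁻¹ • (x - b)) ∂(volume : Measure E)
      = ENNReal.ofReal (a ^ m) * ∫⁻ t in (fun x => a⁻¹ • (x - b)) '' T, g t := by
  set e := waveEquiv a ha.ne' b with he
  have himg : (fun x : E => a⁻¹ • (x - b)) '' T = ⇑e.symm ⁻¹' T := by
    rw [← MeasurableEquiv.image_eq_preimage_symm]; rfl
  have hS : MeasurableSet ((fun x : E => a⁻¹ • (x - b)) '' T) := by
    rw [himg]; exact e.symm.measurable hT
  have hind : T.indicator (fun x => g (e x))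
      = fun x => ((fun x : E => a⁻¹ • (x - b)) '' T).indicator g (e x) := by
    funext x
    by_cases hx : x ∈ T
    · rw [Set.indicator_of_mem hx, Set.indicator_of_mem]
      exact ⟨x, hx, rfl⟩
    · rw [Set.indicator_of_notMem hx, Set.indicator_of_notMem]
      rintro ⟨y, hy, hxy⟩
      exact hx (e.injective hxy ▸ hy)
  calc ∫⁻ x in T, g (a⁻¹ • (x - b)) ∂(volume : Measure E)
      = ∫⁻ x, T.indicator (fun x => g (e x)) x ∂(volume : Measure E) := by
        rw [lintegral_indicator hT]; rfl
    _ = ∫⁻ x, ((fun x : E => a⁻¹ • (x - b)) '' T).indicator g (e x) ∂(volume : Measure E) := by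
        rw [hind]
    _ = ∫⁻ y, ((fun x : E => a⁻¹ • (x - b)) '' T).indicator g y ∂(Measure.map e volume) := by
        rw [lintegral_map_equiv]
    _ = ENNReal.ofReal (a ^ m) * ∫⁻ t in (fun x : E => a⁻¹ • (x - b)) '' T, g t := by
        rw [waveEquiv_map a ha b, lintegral_smul_measure, lintegral_indicator hS, smul_eq_mul]

end

section
variable {m : ℕ}
local notation "E" => EuclideanSpace ℝ (Fin m)

lemma memLp_comp_waveEquiv {ψ : E → ℂ} (hψ : MemLp ψ 2 (volume : Measure E))
    (a : ℝ) (ha : 0 < a) (b : E) :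
    MemLp (fun x : E => (starRingEnd ℂ) (ψ (a⁻¹ • (x - b)))) 2 (volume : Measure E) := by
  have hcomp : MemLp (fun x : E => ψ (a⁻¹ • (x - b))) 2 (volume : Measure E) := by
    have haesm : AEStronglyMeasurable (fun x : E => ψ (a⁻¹ • (x - b))) volume :=
      hψ.1.comp_quasiMeasurePreserving (waveEquiv_qmp a ha b)
    refine ⟨haesm, ?_⟩
    have hmap : AEStronglyMeasurable ψ (Measure.map (⇑(waveEquiv a ha.ne' b)) volume) := by
      rw [waveEquiv_map a ha b]
      exact hψ.1.mono_ac Measure.smul_absolutelyContinuous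
    have heq : eLpNorm (fun x : E => ψ (a⁻¹ • (x - b))) 2 volume
        = eLpNorm ψ 2 (Measure.map (⇑(waveEquiv a ha.ne' b)) volume) :=
      (eLpNorm_map_measure hmap (waveEquiv a ha.ne' b).measurable.aemeasurable).symm
    rw [heq, waveEquiv_map a ha b,
      eLpNorm_smul_measure_of_ne_top (by norm_num : (2 : ℝ≥0∞) ≠ ∞), smul_eq_mul]
    exact ENNReal.mul_lt_top
      (ENNReal.rpow_lt_top_of_nonneg (by norm_num) ENNReal.ofReal_ne_top) hψ.2
  refine ⟨?_, ?_⟩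
  · exact RCLike.continuous_conj.comp_aestronglyMeasurable hcomp.1
  · have : (fun x : E => (starRingEnd ℂ) (ψ (a⁻¹ • (x - b))))
        = (starRingEnd (E → ℂ)) (fun x : E => ψ (a⁻¹ • (x - b))) := rfl
    rw [this, eLpNorm_conj]
    exact hcomp.2
end

section
variable {m : ℕ}
local notation "E" => EuclideanSpace ℝ (Fin m)

lemma waveletMeasure_ae_pos :
    ∀ᵐ p ∂(waveletMeasure m), 0 < p.1 := by
  rw [ae_iff]
  have hset : {p : ℝ × E | ¬0 < p.1} = (Set.Ioi (0:ℝ))ᶜ ×ˢ (Set.univ : Set E) := by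
    ext p; simp [Set.mem_prod]
  rw [waveletMeasure, hset, Measure.prod_prod]
  have : (((volume : Measure ℝ).restrict (Set.Ioi 0)).withDensity
      (fun a => ENNReal.ofReal (a ^ (-((m : ℝ) + 1))))) ((Set.Ioi (0:ℝ))ᶜ) = 0 := by
    rw [withDensity_apply _ (measurableSet_Ioi.compl),
      Measure.restrict_restrict (measurableSet_Ioi.compl), Set.compl_inter_self,
      Measure.restrict_empty, lintegral_zero_measure]
  rw [this, zero_mul]
end

section
variable {m : ℕ}
local notation "E" => EuclideanSpace ℝ (Fin m)

lemma measurable_wavePhi :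
    Measurable (fun q : (ℝ × E) × E => q.1.1⁻¹ • (q.2 - q.1.2)) :=
  (measurable_fst.fst.inv).smul (measurable_snd.sub measurable_fst.snd)

lemma aesm_comp_wavePhi {ψ : E → ℂ} (hψ : AEStronglyMeasurable ψ (volume : Measure E)) :
    AEStronglyMeasurable (fun q : (ℝ × E) × E => ψ (q.1.1⁻¹ • (q.2 - q.1.2)))
      ((waveletMeasure m).prod (volume : Measure E)) := by
  set ψ' := hψ.mk ψ with hψ'
  refine ⟨fun q => ψ' (q.1.1⁻¹ • (q.2 - q.1.2)),
    hψ.stronglyMeasurable_mk.comp_measurable measurable_wavePhi, ?_⟩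
  set N := toMeasurable (volume : Measure E) {x | ψ x ≠ ψ' x} with hN
  have hNmeas : MeasurableSet N := measurableSet_toMeasurable _ _
  have hNnull : volume N = 0 := by
    rw [measure_toMeasurable]
    exact hψ.ae_eq_mk
  have hsub : {q : (ℝ × E) × E | ψ (q.1.1⁻¹ • (q.2 - q.1.2)) ≠ ψ' (q.1.1⁻¹ • (q.2 - q.1.2))}
      ⊆ (fun q : (ℝ × E) × E => q.1.1⁻¹ • (q.2 - q.1.2)) ⁻¹' N := by
    intro q hq
    exact subset_toMeasurable _ _ hq
  have hpre : ((waveletMeasure m).prod (volume : Measure E))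
      ((fun q : (ℝ × E) × E => q.1.1⁻¹ • (q.2 - q.1.2)) ⁻¹' N) = 0 := by
    rw [Measure.prod_apply (measurable_wavePhi hNmeas)]
    rw [← lintegral_zero (μ := waveletMeasure m)]
    refine lintegral_congr_ae ?_
    filter_upwards [waveletMeasure_ae_pos (m := m)] with p hp
    have : (Prod.mk p ⁻¹' ((fun q : (ℝ × E) × E => q.1.1⁻¹ • (q.2 - q.1.2)) ⁻¹' N))
        = ⇑(waveEquiv p.1 hp.ne' p.2) ⁻¹' N := rfl
    rw [this]
    exact waveEquiv_null p.1 hp p.2 hNnull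
  rw [Filter.EventuallyEq, ae_iff]
  exact measure_mono_null hsub hpre

end

section
variable {m : ℕ}
local notation "E" => EuclideanSpace ℝ (Fin m)

lemma aesm_waveletTransform {ψ g : E → ℂ}
    (hψ : AEStronglyMeasurable ψ (volume : Measure E))
    (hg : AEStronglyMeasurable g (volume : Measure E)) :
    AEStronglyMeasurable (waveletTransform m ψ g) (waveletMeasure m) := by
  have hF : AEStronglyMeasurable
      (fun q : (ℝ × E) × E => g q.2 * (starRingEnd ℂ) (ψ (q.1.1⁻¹ • (q.2 - q.1.2))))
      ((waveletMeasure m).prod (volume : Measure E)) := by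
    refine AEStronglyMeasurable.mul ?_ ?_
    · exact hg.comp_snd
    · exact RCLike.continuous_conj.comp_aestronglyMeasurable (aesm_comp_wavePhi hψ)
  have hI : AEStronglyMeasurable
      (fun p : ℝ × E => ∫ x, g x * (starRingEnd ℂ) (ψ (p.1⁻¹ • (x - p.2))) ∂(volume : Measure E))
      (waveletMeasure m) := hF.integral_prod_right'
  have hc : Measurable (fun p : ℝ × E => ((p.1 ^ (-(m : ℝ) / 2) : ℝ) : ℂ)) :=
    Complex.measurable_ofReal.comp (measurable_fst.pow_const _)
  exact hc.aestronglyMeasurable.mul hI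

end

section
variable {m : ℕ}
local notation "E" => EuclideanSpace ℝ (Fin m)

lemma integrable_wavelet_mul {ψ g : E → ℂ} (hψ : MemLp ψ 2 (volume : Measure E))
    (hg : MemLp g 2 (volume : Measure E)) (a : ℝ) (ha : 0 < a) (b : E) :
    Integrable (fun x => g x * (starRingEnd ℂ) (ψ (a⁻¹ • (x - b)))) (volume : Measure E) := by
  have hK := memLp_comp_waveEquiv hψ a ha b
  have h1 : (1 : ℝ≥0∞) = 1 / 2 + 1 / 2 := (ENNReal.add_halves 1).symm
  have hprod : MemLp (g • fun x : E => (starRingEnd ℂ) (ψ (a⁻¹ • (x - b)))) 1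
      (volume : Measure E) := hK.smul hg (hpqr := ⟨by rw [inv_one, ← one_div]; exact h1.symm⟩)
  rw [← memLp_one_iff_integrable]
  have : (g • fun x : E => (starRingEnd ℂ) (ψ (a⁻¹ • (x - b))))
      = fun x => g x * (starRingEnd ℂ) (ψ (a⁻¹ • (x - b))) := rfl
  rwa [this] at hprod

lemma waveletTransform_split {ψ f : E → ℂ} (hψ : MemLp ψ 2 (volume : Measure E))
    (hf2 : MemLp f 2 (volume : Measure E)) (T : Set E) (hT : MeasurableSet T)
    (p : ℝ × E) (hp : 0 < p.1) :
    waveletTransform m ψ f p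
      = waveletTransform m ψ (T.indicator f) p + waveletTransform m ψ (Tᶜ.indicator f) p := by
  unfold waveletTransform
  rw [← mul_add, ← integral_add
    (integrable_wavelet_mul hψ (hf2.indicator hT) p.1 hp p.2)
    (integrable_wavelet_mul hψ (hf2.indicator hT.compl) p.1 hp p.2)]
  congr 1
  refine integral_congr_ae (Filter.Eventually.of_forall fun x => ?_)
  show f x * _ = T.indicator f x * _ + Tᶜ.indicator f x * _
  rw [← add_mul, Set.indicator_self_add_compl_apply]

end

section
variable {m : ℕ}
local notation "E" => EuclideanSpace ℝ (Fin m)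

lemma wavelet_CS {ψ f : E → ℂ} (hψ : MemLp ψ 2 (volume : Measure E))
    (hf : AEStronglyMeasurable f (volume : Measure E))
    (T : Set E) (hT : MeasurableSet T) (p : ℝ × E) (hp : 0 < p.1) :
    (‖waveletTransform m ψ (T.indicator f) p‖₊ : ℝ≥0∞) ^ (2 : ℝ)
      ≤ (∫⁻ x, (‖f x‖₊ : ℝ≥0∞) ^ (2 : ℝ) ∂(volume : Measure E)) *
        ∫⁻ t in (fun x => p.1⁻¹ • (x - p.2)) '' T, (‖ψ t‖₊ : ℝ≥0∞) ^ 2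
          ∂(volume : Measure E) := by
  obtain ⟨a, b⟩ := p
  simp only at hp ⊢
  set U : ℝ≥0∞ := ∫⁻ x, (‖f x‖₊ : ℝ≥0∞) ^ (2 : ℝ) ∂(volume : Measure E) with hU
  set Φ : ℝ≥0∞ := ∫⁻ t in (fun x : E => a⁻¹ • (x - b)) '' T, (‖ψ t‖₊ : ℝ≥0∞) ^ 2
    ∂(volume : Measure E) with hΦ
  set u : E → ℝ≥0∞ := fun x => (‖f x‖₊ : ℝ≥0∞) with hu
  set v : E → ℝ≥0∞ := T.indicator (fun x => (‖ψ (a⁻¹ • (x - b))‖₊ : ℝ≥0∞)) with hv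
  have haesmψ : AEStronglyMeasurable (fun x : E => ψ (a⁻¹ • (x - b))) volume :=
    hψ.1.comp_quasiMeasurePreserving (waveEquiv_qmp a hp b)
  -- Step A : pointwise norm identity
  have hpt : ∀ x : E, (‖T.indicator f x * (starRingEnd ℂ) (ψ (a⁻¹ • (x - b)))‖₊ : ℝ≥0∞)
      = u x * v x := by
    intro x
    by_cases hx : x ∈ T
    · simp [hu, hv, Set.indicator_of_mem hx, nnnorm_mul, RCLike.nnnorm_conj,
        ENNReal.coe_mul]
    · simp [hu, hv, Set.indicator_of_notMem hx]
  -- Step B : Hölder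
  have hCS : ∫⁻ x, u x * v x ∂(volume : Measure E)
      ≤ (∫⁻ x, u x ^ (2:ℝ) ∂(volume : Measure E)) ^ ((1:ℝ)/2)
        * (∫⁻ x, v x ^ (2:ℝ) ∂(volume : Measure E)) ^ ((1:ℝ)/2) := by
    have := ENNReal.lintegral_mul_le_Lp_mul_Lq (volume : Measure E)
      (Real.holderConjugate_iff.mpr ⟨one_lt_two, by norm_num⟩ : Real.HolderConjugate 2 2)
      hf.enorm (haesmψ.enorm.indicator hT)
    simpa [hu, hv, enorm_eq_nnnorm] using this
  -- Step C : compute ∫ v²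
  have hVeq : ∫⁻ x, v x ^ (2:ℝ) ∂(volume : Measure E) = ENNReal.ofReal (a ^ m) * Φ := by
    have hvsq : (fun x => v x ^ (2:ℝ))
        = T.indicator (fun x => ((‖ψ (a⁻¹ • (x - b))‖₊ : ℝ≥0∞) ^ 2)) := by
      funext x
      by_cases hx : x ∈ T
      · rw [hv, Set.indicator_of_mem hx, Set.indicator_of_mem hx,
          ← ENNReal.rpow_natCast]
        norm_num
      · simp [hv, Set.indicator_of_notMem hx, ENNReal.zero_rpow_of_pos (by norm_num : (0:ℝ) < 2)]
    rw [hvsq, lintegral_indicator hT,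
      lintegral_waveEquiv a hp b T hT (fun t => (‖ψ t‖₊ : ℝ≥0∞) ^ 2)]
  -- Step D : bound on the integral's norm
  have hI : (‖∫ x, T.indicator f x * (starRingEnd ℂ) (ψ (a⁻¹ • (x - b)))
        ∂(volume : Measure E)‖₊ : ℝ≥0∞)
      ≤ U ^ ((1:ℝ)/2) * (ENNReal.ofReal (a ^ m) * Φ) ^ ((1:ℝ)/2) := by
    calc (‖∫ x, T.indicator f x * (starRingEnd ℂ) (ψ (a⁻¹ • (x - b)))
          ∂(volume : Measure E)‖₊ : ℝ≥0∞)
        ≤ ∫⁻ x, (‖T.indicator f x * (starRingEnd ℂ) (ψ (a⁻¹ • (x - b)))‖₊ : ℝ≥0∞)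
          ∂(volume : Measure E) := enorm_integral_le_lintegral_enorm _
      _ = ∫⁻ x, u x * v x ∂(volume : Measure E) := by simp_rw [hpt]
      _ ≤ (∫⁻ x, u x ^ (2:ℝ) ∂(volume : Measure E)) ^ ((1:ℝ)/2)
          * (∫⁻ x, v x ^ (2:ℝ) ∂(volume : Measure E)) ^ ((1:ℝ)/2) := hCS
      _ = U ^ ((1:ℝ)/2) * (ENNReal.ofReal (a ^ m) * Φ) ^ ((1:ℝ)/2) := by rw [hVeq]
  -- Step E : put everything together
  have hsq : ∀ x : ℝ≥0∞, (x ^ ((1:ℝ)/2)) ^ (2:ℕ) = x := fun x => by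
    rw [← ENNReal.rpow_natCast, ← ENNReal.rpow_mul]; norm_num
  have hnorm : (‖waveletTransform m ψ (T.indicator f) (a, b)‖₊ : ℝ≥0∞)
      = ENNReal.ofReal (a ^ (-(m:ℝ)/2)) *
        (‖∫ x, T.indicator f x * (starRingEnd ℂ) (ψ (a⁻¹ • (x - b)))
          ∂(volume : Measure E)‖₊ : ℝ≥0∞) := by
    rw [waveletTransform]
    push_cast [nnnorm_mul]
    congr 1
    simp [← enorm_eq_nnnorm, Real.enorm_eq_ofReal (Real.rpow_nonneg hp.le _)]
  have hunit : ENNReal.ofReal (a ^ (-(m:ℝ)/2)) ^ (2:ℕ) * ENNReal.ofReal (a ^ m) = 1 := by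
    rw [← ENNReal.ofReal_pow (Real.rpow_nonneg hp.le _), ← ENNReal.ofReal_mul (by positivity)]
    rw [← Real.rpow_natCast (a ^ (-(m:ℝ)/2)), ← Real.rpow_mul hp.le,
      ← Real.rpow_natCast a m, ← Real.rpow_add hp]
    norm_num
  calc (‖waveletTransform m ψ (T.indicator f) (a, b)‖₊ : ℝ≥0∞) ^ (2:ℝ)
      = ((‖waveletTransform m ψ (T.indicator f) (a, b)‖₊ : ℝ≥0∞)) ^ (2:ℕ) := by
        rw [← ENNReal.rpow_natCast]; norm_num
    _ = ENNReal.ofReal (a ^ (-(m:ℝ)/2)) ^ (2:ℕ) *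
        (‖∫ x, T.indicator f x * (starRingEnd ℂ) (ψ (a⁻¹ • (x - b)))
          ∂(volume : Measure E)‖₊ : ℝ≥0∞) ^ (2:ℕ) := by rw [hnorm, mul_pow]
    _ ≤ ENNReal.ofReal (a ^ (-(m:ℝ)/2)) ^ (2:ℕ) *
        (U ^ ((1:ℝ)/2) * (ENNReal.ofReal (a ^ m) * Φ) ^ ((1:ℝ)/2)) ^ (2:ℕ) := by
        gcongr
    _ = ENNReal.ofReal (a ^ (-(m:ℝ)/2)) ^ (2:ℕ) * (U * (ENNReal.ofReal (a ^ m) * Φ)) := by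
        rw [mul_pow, hsq, hsq]
    _ = (ENNReal.ofReal (a ^ (-(m:ℝ)/2)) ^ (2:ℕ) * ENNReal.ofReal (a ^ m)) * (U * Φ) := by
        ring
    _ = U * Φ := by rw [hunit, one_mul]
end

/-- **Donoho–Stark uncertainty principle for the wavelet transform:**
`‖T_ψ f‖_{L²(μ)} ≤ (A_ψ ε_T + φ_{Ω,T}(ψ)^{1/2}) / (1 − ε_Ω) · ‖f‖_{L²}`. -/
theorem donoho_stark_waveletTransform
    (m : ℕ) (hm : 1 ≤ m)
    (ψ f : EuclideanSpace ℝ (Fin m) → ℂ)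
    (hψ : MemLp ψ 2 (volume : Measure (EuclideanSpace ℝ (Fin m))))
    (hf1 : MemLp f 1 (volume : Measure (EuclideanSpace ℝ (Fin m))))
    (hf2 : MemLp f 2 (volume : Measure (EuclideanSpace ℝ (Fin m))))
    (T : Set (EuclideanSpace ℝ (Fin m))) (hT : MeasurableSet T)
    (Ω : Set (ℝ × EuclideanSpace ℝ (Fin m))) (hΩ : MeasurableSet Ω)
    (hΩ_sub : Ω ⊆ Set.Ioi (0 : ℝ) ×ˢ Set.univ)
    (εT εΩ : ℝ) (hεT : 0 ≤ εT) (hεΩ₀ : 0 ≤ εΩ) (hεΩ₁ : εΩ < 1)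
    (Aψ : ℝ) (hAψ : 0 < Aψ)
    (hParseval : ∀ g : EuclideanSpace ℝ (Fin m) → ℂ,
      MemLp g 2 (volume : Measure (EuclideanSpace ℝ (Fin m))) →
        eLpNorm (waveletTransform m ψ g) 2 (waveletMeasure m) =
          ENNReal.ofReal Aψ * eLpNorm g 2 (volume : Measure (EuclideanSpace ℝ (Fin m))))
    (hconcT : eLpNorm (Tᶜ.indicator f) 2 (volume : Measure (EuclideanSpace ℝ (Fin m)))
      ≤ ENNReal.ofReal εT * eLpNorm f 2 (volume : Measure (EuclideanSpace ℝ (Fin m))))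
    (hconcΩ : eLpNorm (Ωᶜ.indicator (waveletTransform m ψ f)) 2 (waveletMeasure m)
      ≤ ENNReal.ofReal εΩ * eLpNorm (waveletTransform m ψ f) 2 (waveletMeasure m)) :
    eLpNorm (waveletTransform m ψ f) 2 (waveletMeasure m) ≤
      (ENNReal.ofReal Aψ * ENNReal.ofReal εT + (phiOmegaT m ψ Ω T) ^ (1 / 2 : ℝ)) /
          ENNReal.ofReal (1 - εΩ) *
        eLpNorm f 2 (volume : Measure (EuclideanSpace ℝ (Fin m))) := by
  classical
  set μ := waveletMeasure m with hμ
  set W := waveletTransform m ψ f with hW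
  set W1 := waveletTransform m ψ (T.indicator f) with hW1
  set W2 := waveletTransform m ψ (Tᶜ.indicator f) with hW2
  set Nf := eLpNorm f 2 (volume : Measure (EuclideanSpace ℝ (Fin m))) with hNf
  set N := eLpNorm W 2 μ with hN
  have hNf_ne_top : Nf ≠ ∞ := hf2.2.ne
  have hN_eq : N = ENNReal.ofReal Aψ * Nf := hParseval f hf2
  have hN_ne_top : N ≠ ∞ := by
    rw [hN_eq]
    exact ENNReal.mul_ne_top ENNReal.ofReal_ne_top hNf_ne_top
  by_cases hNf0 : Nf = 0
  · rw [hN_eq, hNf0, mul_zero]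
    exact zero_le
  -- measurability
  have hWm : AEStronglyMeasurable W μ := aesm_waveletTransform hψ.1 hf2.1
  have hW1m : AEStronglyMeasurable W1 μ :=
    aesm_waveletTransform hψ.1 (hf2.indicator hT).1
  have hW2m : AEStronglyMeasurable W2 μ :=
    aesm_waveletTransform hψ.1 (hf2.indicator hT.compl).1
  -- Step 1 : N ≤ ‖1_Ω W‖ + εΩ N
  have step1 : N ≤ eLpNorm (Ω.indicator W) 2 μ + ENNReal.ofReal εΩ * N := by
    have hWsum : W = Ω.indicator W + Ωᶜ.indicator W := (Set.indicator_self_add_compl Ω W).symm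
    calc N = eLpNorm (Ω.indicator W + Ωᶜ.indicator W) 2 μ := by rw [hN, ← hWsum]
      _ ≤ eLpNorm (Ω.indicator W) 2 μ + eLpNorm (Ωᶜ.indicator W) 2 μ :=
          eLpNorm_add_le (hWm.indicator hΩ) (hWm.indicator hΩ.compl) one_le_two
      _ ≤ eLpNorm (Ω.indicator W) 2 μ + ENNReal.ofReal εΩ * N := by
          exact add_le_add_right hconcΩ _
  -- Step 2 : indicator splitting a.e.
  have hsplit : Ω.indicator W =ᵐ[μ] Ω.indicator W1 + Ω.indicator W2 := by
    filter_upwards [waveletMeasure_ae_pos (m := m)] with p hp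
    by_cases hpΩ : p ∈ Ω
    · simp only [Pi.add_apply, Set.indicator_of_mem hpΩ]
      exact waveletTransform_split hψ hf2 T hT p hp
    · simp [Set.indicator_of_notMem hpΩ]
  have step2 : eLpNorm (Ω.indicator W) 2 μ
      ≤ eLpNorm (Ω.indicator W1) 2 μ + eLpNorm (Ω.indicator W2) 2 μ := by
    rw [eLpNorm_congr_ae hsplit]
    exact eLpNorm_add_le (hW1m.indicator hΩ) (hW2m.indicator hΩ) one_le_two
  -- Step 3 : W2-term
  have step3 : eLpNorm (Ω.indicator W2) 2 μ
      ≤ ENNReal.ofReal Aψ * (ENNReal.ofReal εT * Nf) := by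
    calc eLpNorm (Ω.indicator W2) 2 μ ≤ eLpNorm W2 2 μ := eLpNorm_indicator_le _
      _ = ENNReal.ofReal Aψ * eLpNorm (Tᶜ.indicator f) 2 (volume : Measure (EuclideanSpace ℝ (Fin m))) :=
          hParseval _ (hf2.indicator hT.compl)
      _ ≤ ENNReal.ofReal Aψ * (ENNReal.ofReal εT * Nf) := mul_le_mul_right hconcT _
  -- Step 4 : W1-term via Cauchy–Schwarz
  set U : ℝ≥0∞ := ∫⁻ x, (‖f x‖₊ : ℝ≥0∞) ^ (2 : ℝ) ∂(volume : Measure (EuclideanSpace ℝ (Fin m))) with hU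
  have h2toReal : (2 : ℝ≥0∞).toReal = (2 : ℝ) := by norm_num
  have hNfU : Nf = U ^ ((1:ℝ)/2) := by
    rw [hNf, eLpNorm_eq_lintegral_rpow_enorm_toReal (two_ne_zero) (ENNReal.ofNat_ne_top), h2toReal]
    rfl
  have hsq : ∀ x : ℝ≥0∞, (x ^ ((1:ℝ)/2)) ^ (2:ℕ) = x := fun x => by
    rw [← ENNReal.rpow_natCast, ← ENNReal.rpow_mul]; norm_num
  have hUNf : U = Nf ^ (2:ℕ) := by rw [hNfU, hsq]
  have hU_ne_top : U ≠ ∞ := by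
    rw [hUNf]
    exact ENNReal.pow_ne_top hNf_ne_top
  have step4 : eLpNorm (Ω.indicator W1) 2 μ ≤ (phiOmegaT m ψ Ω T) ^ ((1:ℝ)/2) * Nf := by
    rw [eLpNorm_indicator_eq_eLpNorm_restrict hΩ,
      eLpNorm_eq_lintegral_rpow_enorm_toReal (two_ne_zero) (ENNReal.ofNat_ne_top), h2toReal]
    have hptw : ∫⁻ p, (‖W1 p‖₊ : ℝ≥0∞) ^ (2:ℝ) ∂(μ.restrict Ω)
        ≤ U * phiOmegaT m ψ Ω T := by
      have hmono : ∫⁻ p, (‖W1 p‖₊ : ℝ≥0∞) ^ (2:ℝ) ∂(μ.restrict Ω)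
          ≤ ∫⁻ p, U * (∫⁻ t in (fun x => p.1⁻¹ • (x - p.2)) '' T, (‖ψ t‖₊ : ℝ≥0∞) ^ 2
              ∂(volume : Measure (EuclideanSpace ℝ (Fin m)))) ∂(μ.restrict Ω) := by
        refine lintegral_mono_ae ?_
        filter_upwards [ae_restrict_of_ae (waveletMeasure_ae_pos (m := m))] with p hp
        exact wavelet_CS hψ hf2.1 T hT p hp
      refine hmono.trans ?_
      rw [lintegral_const_mul' _ _ hU_ne_top]
      rfl
    calc (∫⁻ p, (‖W1 p‖₊ : ℝ≥0∞) ^ (2:ℝ) ∂(μ.restrict Ω)) ^ ((1:ℝ)/2)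
        ≤ (U * phiOmegaT m ψ Ω T) ^ ((1:ℝ)/2) :=
          ENNReal.rpow_le_rpow hptw (by norm_num)
      _ = U ^ ((1:ℝ)/2) * (phiOmegaT m ψ Ω T) ^ ((1:ℝ)/2) :=
          ENNReal.mul_rpow_of_nonneg _ _ (by norm_num)
      _ = (phiOmegaT m ψ Ω T) ^ ((1:ℝ)/2) * Nf := by rw [← hNfU, mul_comm]
  -- Step 5 : combine
  set C : ℝ≥0∞ := ENNReal.ofReal Aψ * ENNReal.ofReal εT + (phiOmegaT m ψ Ω T) ^ ((1:ℝ)/2)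
    with hC
  have hmain : N ≤ C * Nf + ENNReal.ofReal εΩ * N := by
    refine step1.trans (add_le_add_left ?_ _)
    refine step2.trans ?_
    rw [hC, add_mul, add_comm (ENNReal.ofReal Aψ * ENNReal.ofReal εT * Nf)]
    refine add_le_add step4 (step3.trans (le_of_eq ?_))
    rw [mul_assoc]
  -- Step 6 : cancellation and division
  have hεΩN_ne_top : ENNReal.ofReal εΩ * N ≠ ∞ :=
    ENNReal.mul_ne_top ENNReal.ofReal_ne_top hN_ne_top
  have hone : ENNReal.ofReal (1 - εΩ) * N + ENNReal.ofReal εΩ * N = N := by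
    rw [← add_mul, ← ENNReal.ofReal_add (by linarith) hεΩ₀]
    norm_num
  have hkey : ENNReal.ofReal (1 - εΩ) * N ≤ C * Nf := by
    have : ENNReal.ofReal (1 - εΩ) * N + ENNReal.ofReal εΩ * N
        ≤ C * Nf + ENNReal.ofReal εΩ * N := by
      rw [hone]; exact hmain
    exact (ENNReal.add_le_add_iff_right hεΩN_ne_top).mp this
  have hd0 : ENNReal.ofReal (1 - εΩ) ≠ 0 :=
    (ENNReal.ofReal_pos.mpr (by linarith)).ne'
  have hfin : N ≤ C * Nf / ENNReal.ofReal (1 - εΩ) := by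
    rw [ENNReal.le_div_iff_mul_le (Or.inl hd0) (Or.inl ENNReal.ofReal_ne_top)]
    rw [mul_comm]
    exact hkey
  refine hfin.trans (le_of_eq ?_)
  rw [ENNReal.div_eq_inv_mul, ENNReal.div_eq_inv_mul]
  ring
end

section
/- Let m ≥ 1, ψ ∈ L²(ℝ^m, ℂ), f ∈ L²(ℝ^m, ℂ) with f ≠ 0 (in L²), T ⊆ ℝ^m and Ω ⊆ (0,∞)×ℝ^m measurable. Assume the Parseval identity ‖T_ψ(g)‖_{L²(μ)} = A_ψ · ‖g‖_{L²(ℝ^m)} holds for every g ∈ L²(ℝ^m, ℂ), where A_ψ > 0 is a constant. If f vanishes almost everywhere outside T and T_ψ(f) vanishes μ-almost everywhere outside Ω, then A_ψ ≤ φ_{Ω,T}(ψ)^{1/2}, where φ_{Ω,T}(ψ) = ∫_Ω (∫_{(T−b)/a} |ψ(t)|² dt) dμ(a,b). -/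
open MeasureTheory Set
open scoped ENNReal

private lemma ennreal_rpow_two (x : ℝ≥0∞) : x ^ (2 : ℝ) = x ^ 2 := by
  rw [show (2 : ℝ) = ((2 : ℕ) : ℝ) by norm_num, ENNReal.rpow_natCast]

/-- If a nonzero `f ∈ L²` is supported in `T` (a.e.) and `T_ψ f` is supported in `Ω`
(μ-a.e.), then `A_ψ ≤ φ_{Ω,T}(ψ)^{1/2}`. -/
theorem donoho_stark_waveletTransform_support
    (m : ℕ) (hm : 1 ≤ m)
    (ψ f : EuclideanSpace ℝ (Fin m) → ℂ)
    (hψ : MemLp ψ 2 (volume : Measure (EuclideanSpace ℝ (Fin m))))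
    (hf : MemLp f 2 (volume : Measure (EuclideanSpace ℝ (Fin m))))
    (hf_ne : eLpNorm f 2 (volume : Measure (EuclideanSpace ℝ (Fin m))) ≠ 0)
    (T : Set (EuclideanSpace ℝ (Fin m))) (hT : MeasurableSet T)
    (Ω : Set (ℝ × EuclideanSpace ℝ (Fin m))) (hΩ : MeasurableSet Ω)
    (hΩ_sub : Ω ⊆ Set.Ioi (0 : ℝ) ×ˢ Set.univ)
    (Aψ : ℝ) (hAψ : 0 < Aψ)
    (hParseval : ∀ g : EuclideanSpace ℝ (Fin m) → ℂ,
      MemLp g 2 (volume : Measure (EuclideanSpace ℝ (Fin m))) →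
        eLpNorm (waveletTransform m ψ g) 2 (waveletMeasure m) =
          ENNReal.ofReal Aψ * eLpNorm g 2 (volume : Measure (EuclideanSpace ℝ (Fin m))))
    (hsuppT : ∀ᵐ x ∂(volume : Measure (EuclideanSpace ℝ (Fin m))), x ∉ T → f x = 0)
    (hsuppΩ : ∀ᵐ p ∂(waveletMeasure m), p ∉ Ω → waveletTransform m ψ f p = 0) :
    ENNReal.ofReal Aψ ≤ (phiOmegaT m ψ Ω T) ^ (1 / 2 : ℝ) := by
  classical
  set ν := waveletMeasure m with hνdef
  set N := eLpNorm f 2 (volume : Measure (EuclideanSpace ℝ (Fin m))) with hNdef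
  have hN_top : N ≠ ∞ := hf.2.ne
  have hfm : AEMeasurable (fun x => (‖f x‖₊ : ℝ≥0∞))
      (volume : Measure (EuclideanSpace ℝ (Fin m))) := hf.1.enorm
  have hNform : N = (∫⁻ x, (‖f x‖₊ : ℝ≥0∞) ^ (2 : ℝ)) ^ (1 / 2 : ℝ) := by
    rw [hNdef, eLpNorm_eq_lintegral_rpow_enorm_toReal two_ne_zero ENNReal.ofNat_ne_top]
    norm_num
    rfl
  -- pointwise bound on `Ω`
  have key : ∀ p : ℝ × EuclideanSpace ℝ (Fin m), 0 < p.1 →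
      (‖waveletTransform m ψ f p‖₊ : ℝ≥0∞) ^ (2 : ℝ) ≤
        N ^ (2 : ℝ) *
          ∫⁻ t in (fun x => p.1⁻¹ • (x - p.2)) '' T, (‖ψ t‖₊ : ℝ≥0∞) ^ (2 : ℝ) := by
    rintro ⟨a, b⟩ (ha : 0 < a)
    set φ : EuclideanSpace ℝ (Fin m) → EuclideanSpace ℝ (Fin m) :=
      fun x => a⁻¹ • (x - b) with hφdef
    set J : ℝ≥0∞ := ∫⁻ t in φ '' T, (‖ψ t‖₊ : ℝ≥0∞) ^ (2 : ℝ) with hJdef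
    set K : ℝ≥0∞ := ∫⁻ x in T, (‖ψ (φ x)‖₊ : ℝ≥0∞) ^ (2 : ℝ) with hKdef
    have hqmp : Measure.QuasiMeasurePreserving φ volume volume :=
      (Measure.quasiMeasurePreserving_smul volume (inv_ne_zero ha.ne')).comp
        (measurePreserving_sub_right volume b).quasiMeasurePreserving
    have hψφ : AEMeasurable (fun x => (‖ψ (φ x)‖₊ : ℝ≥0∞))
        (volume : Measure (EuclideanSpace ℝ (Fin m))) :=
      (hψ.1.comp_quasiMeasurePreserving hqmp).enorm
    have hφinj : Function.Injective φ := by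
      intro x y hxy
      have h1 : x - b = y - b := smul_right_injective _ (inv_ne_zero ha.ne') hxy
      have := congrArg (· + b) h1
      simpa using this
    have hderiv : ∀ x ∈ T, HasFDerivWithinAt φ
        (a⁻¹ • (ContinuousLinearMap.id ℝ (EuclideanSpace ℝ (Fin m)))) T x :=
      fun x _ => (((hasFDerivAt_id x).sub_const b).const_smul a⁻¹).hasFDerivWithinAt
    have hdet : (a⁻¹ • (ContinuousLinearMap.id ℝ (EuclideanSpace ℝ (Fin m)))).det
        = a⁻¹ ^ m := by
      simp only [ContinuousLinearMap.det]
      rw [ContinuousLinearMap.coe_smul, ContinuousLinearMap.coe_id, LinearMap.det_smul,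
        LinearMap.det_id, mul_one, finrank_euclideanSpace_fin]
    have hCoV : J = ENNReal.ofReal (a⁻¹ ^ m) * K := by
      have h := lintegral_image_eq_lintegral_abs_det_fderiv_mul
        (volume : Measure (EuclideanSpace ℝ (Fin m))) hT hderiv hφinj.injOn
        (fun t => (‖ψ t‖₊ : ℝ≥0∞) ^ (2 : ℝ))
      simp only [hdet, abs_of_pos (pow_pos (inv_pos.mpr ha) m)] at h
      rw [hJdef, h, lintegral_const_mul' _ _ ENNReal.ofReal_ne_top, hKdef]
    have hKJ : K = ENNReal.ofReal (a ^ m) * J := by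
      rw [hCoV, ← mul_assoc, ← ENNReal.ofReal_mul (by positivity), ← mul_pow,
        mul_inv_cancel₀ ha.ne', one_pow, ENNReal.ofReal_one, one_mul]
    have h1 : (‖waveletTransform m ψ f (a, b)‖₊ : ℝ≥0∞) ≤
        ENNReal.ofReal (a ^ (-(m : ℝ) / 2)) *
          ∫⁻ x, (‖f x‖₊ : ℝ≥0∞) * (‖ψ (φ x)‖₊ : ℝ≥0∞) := by
      rw [waveletTransform]
      simp only [nnnorm_mul, ENNReal.coe_mul]
      have hc : (‖((a ^ (-(m : ℝ) / 2) : ℝ) : ℂ)‖₊ : ℝ≥0∞)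
          = ENNReal.ofReal (a ^ (-(m : ℝ) / 2)) := by
        rw [Complex.nnnorm_real]; exact Real.enorm_eq_ofReal (Real.rpow_pos_of_pos ha _).le
      rw [hc]
      refine mul_le_mul' le_rfl ?_
      refine (enorm_integral_le_lintegral_enorm _).trans_eq ?_
      refine lintegral_congr fun x => ?_
      simp [nnnorm_mul, RCLike.nnnorm_conj, hφdef]
      rfl
    have h2 : (∫⁻ x, (‖f x‖₊ : ℝ≥0∞) * (‖ψ (φ x)‖₊ : ℝ≥0∞))
        = ∫⁻ x in T, (‖f x‖₊ : ℝ≥0∞) * (‖ψ (φ x)‖₊ : ℝ≥0∞) := by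
      rw [← lintegral_indicator hT]
      refine lintegral_congr_ae ?_
      filter_upwards [hsuppT] with x hx
      by_cases hxT : x ∈ T
      · simp [Set.indicator_of_mem hxT]
      · simp [Set.indicator_of_notMem hxT, hx hxT]
    have h3 : (∫⁻ x in T, (‖f x‖₊ : ℝ≥0∞) * (‖ψ (φ x)‖₊ : ℝ≥0∞)) ≤
        (∫⁻ x in T, (‖f x‖₊ : ℝ≥0∞) ^ (2 : ℝ)) ^ (1 / 2 : ℝ) * K ^ (1 / 2 : ℝ) :=
      ENNReal.lintegral_mul_le_Lp_mul_Lq _ Real.HolderConjugate.two_two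
        hfm.restrict hψφ.restrict
    have h4 : (∫⁻ x in T, (‖f x‖₊ : ℝ≥0∞) ^ (2 : ℝ)) ^ (1 / 2 : ℝ) ≤ N := by
      rw [hNform]
      exact ENNReal.rpow_le_rpow (setLIntegral_le_lintegral _ _) (by norm_num)
    have h5 : (‖waveletTransform m ψ f (a, b)‖₊ : ℝ≥0∞) ≤
        ENNReal.ofReal (a ^ (-(m : ℝ) / 2)) * (N * K ^ (1 / 2 : ℝ)) := by
      refine h1.trans ?_
      rw [h2]
      exact mul_le_mul' le_rfl (h3.trans (mul_le_mul' h4 le_rfl))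
    calc (‖waveletTransform m ψ f (a, b)‖₊ : ℝ≥0∞) ^ (2 : ℝ)
        ≤ (ENNReal.ofReal (a ^ (-(m : ℝ) / 2)) * (N * K ^ (1 / 2 : ℝ))) ^ (2 : ℝ) :=
          ENNReal.rpow_le_rpow h5 (by norm_num)
      _ = N ^ (2 : ℝ) * (ENNReal.ofReal (a ^ (-(m : ℝ) / 2)) ^ (2 : ℝ) * K) := by
          rw [ENNReal.mul_rpow_of_nonneg _ _ (by norm_num : (0:ℝ) ≤ 2),
            ENNReal.mul_rpow_of_nonneg _ _ (by norm_num : (0:ℝ) ≤ 2),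
            ← ENNReal.rpow_mul K]
          norm_num
          ring
      _ = N ^ (2 : ℝ) * J := by
          have e1 : ((a ^ (-(m : ℝ) / 2)) : ℝ) ^ (2 : ℝ) = a ^ (-(m : ℝ)) := by
            rw [← Real.rpow_mul ha.le]
            norm_num
          have e0 : ENNReal.ofReal (a ^ (-(m : ℝ) / 2)) ^ (2 : ℝ)
              = ENNReal.ofReal (a ^ (-(m : ℝ))) := by
            rw [ENNReal.ofReal_rpow_of_pos (Real.rpow_pos_of_pos ha _), e1]
          have e2 : ENNReal.ofReal (a ^ (-(m : ℝ))) * ENNReal.ofReal ((a : ℝ) ^ m) = 1 := by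
            rw [← ENNReal.ofReal_mul (by positivity), ← Real.rpow_natCast a m,
              ← Real.rpow_add ha, neg_add_cancel, Real.rpow_zero, ENNReal.ofReal_one]
          rw [e0, hKJ,
            show (N ^ (2:ℝ)) * (ENNReal.ofReal (a ^ (-(m : ℝ))) * (ENNReal.ofReal ((a:ℝ) ^ m) * J))
              = (ENNReal.ofReal (a ^ (-(m : ℝ))) * ENNReal.ofReal ((a:ℝ) ^ m)) * ((N ^ (2:ℝ)) * J)
              from by ring, e2, one_mul]
  -- global estimate
  have hS : eLpNorm (waveletTransform m ψ f) 2 ν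
      = (∫⁻ p, (‖waveletTransform m ψ f p‖₊ : ℝ≥0∞) ^ (2 : ℝ) ∂ν) ^ (1 / 2 : ℝ) := by
    rw [eLpNorm_eq_lintegral_rpow_enorm_toReal two_ne_zero ENNReal.ofNat_ne_top]
    norm_num
    rfl
  have hSΩ : (∫⁻ p, (‖waveletTransform m ψ f p‖₊ : ℝ≥0∞) ^ (2 : ℝ) ∂ν)
      = ∫⁻ p in Ω, (‖waveletTransform m ψ f p‖₊ : ℝ≥0∞) ^ (2 : ℝ) ∂ν := by
    rw [← lintegral_indicator hΩ]
    refine lintegral_congr_ae ?_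
    filter_upwards [hsuppΩ] with p hp
    by_cases hpΩ : p ∈ Ω
    · simp [Set.indicator_of_mem hpΩ]
    · simp [Set.indicator_of_notMem hpΩ, hp hpΩ,
        ENNReal.zero_rpow_of_pos (by norm_num : (0:ℝ) < 2)]
  have hNpow_top : N ^ (2 : ℝ) ≠ ∞ := ENNReal.rpow_ne_top_of_nonneg (by norm_num) hN_top
  have hbound : (∫⁻ p in Ω, (‖waveletTransform m ψ f p‖₊ : ℝ≥0∞) ^ (2 : ℝ) ∂ν)
      ≤ N ^ (2 : ℝ) * phiOmegaT m ψ Ω T := by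
    rw [phiOmegaT, ← lintegral_const_mul' _ _ hNpow_top]
    refine setLIntegral_mono' hΩ fun p hp => ?_
    have h := key p (hΩ_sub hp).1
    simpa [ennreal_rpow_two] using h
  have hP := hParseval f hf
  have hS2 : (ENNReal.ofReal Aψ) ^ (2 : ℝ) * N ^ (2 : ℝ)
      = ∫⁻ p, (‖waveletTransform m ψ f p‖₊ : ℝ≥0∞) ^ (2 : ℝ) ∂ν := by
    have h := hS.symm.trans hP
    have h2 := congrArg (fun x : ℝ≥0∞ => x ^ (2 : ℝ)) h
    simp only [← ENNReal.rpow_mul,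
      ENNReal.mul_rpow_of_nonneg _ _ (by norm_num : (0:ℝ) ≤ 2)] at h2
    norm_num at h2
    simpa [ennreal_rpow_two] using h2.symm
  have hA2 : (ENNReal.ofReal Aψ) ^ (2 : ℝ) ≤ phiOmegaT m ψ Ω T := by
    have hfin : (ENNReal.ofReal Aψ) ^ (2 : ℝ) * N ^ (2 : ℝ)
        ≤ phiOmegaT m ψ Ω T * N ^ (2 : ℝ) := by
      rw [hS2, hSΩ]
      exact hbound.trans_eq (mul_comm _ _)
    have hNpow_ne : N ^ (2 : ℝ) ≠ 0 := by
      simp [ENNReal.rpow_eq_zero_iff, hf_ne, hN_top]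
    exact (ENNReal.mul_le_mul_iff_left hNpow_ne hNpow_top).mp hfin
  calc ENNReal.ofReal Aψ = ((ENNReal.ofReal Aψ) ^ (2 : ℝ)) ^ (1 / 2 : ℝ) := by
        rw [← ENNReal.rpow_mul]
        norm_num
    _ ≤ (phiOmegaT m ψ Ω T) ^ (1 / 2 : ℝ) := ENNReal.rpow_le_rpow hA2 (by norm_num)
end
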